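/- Let n ≥ 1 and σ ∈ (0,1). For each integer j ≥ 1 set R_j = j^{1/(2σ)} and define V_j : ℝ^n → ℝ by V_j(y) = 1 for y ∈ B_{3R_j} and V_j(y) = 1 + j for y ∈ B_{3R_j}^c. Then V_j converges to the constant function 1 in C²_loc(ℝ^n), and for every x ∈ ℝ^n the fractional Laplacian (-Δ)^σ V_j(x) exists for all j large enough (namely whenever |x| < 3R_j) and lim_{j→∞} (-Δ)^σ V_j(x) = −c_{n,σ} |𝕊^{n−1}| / (2σ · 3^{2σ}), where |𝕊^{n−1}| is the surface measure of the unit sphere in ℝ^n. -/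

import Mathlib

open MeasureTheory Metric Filter

noncomputable section

def fracLapConst (n : ℕ) (σ : ℝ) : ℝ :=
  2 ^ (2 * σ) * σ * Real.Gamma ((n + 2 * σ) / 2) /
    (Real.pi ^ ((n : ℝ) / 2) * Real.Gamma (1 - σ))

def HasFracLap (n : ℕ) (σ : ℝ) (u : EuclideanSpace ℝ (Fin n) → ℝ)
    (x : EuclideanSpace ℝ (Fin n)) (L : ℝ) : Prop :=
  Filter.Tendsto
    (fun ε : ℝ => fracLapConst n σ *
      ∫ y in {y : EuclideanSpace ℝ (Fin n) | ε < dist x y},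
        (u x - u y) / dist x y ^ ((n : ℝ) + 2 * σ))
    (nhdsWithin 0 (Set.Ioi 0)) (nhds L)

def sphereSurface (n : ℕ) : ℝ :=
  n * (volume (Metric.ball (0 : EuclideanSpace ℝ (Fin n)) 1)).toReal

open Set Real

section Aux

lemma FracLapAux.iter_congr {n : ℕ} {f₁ f : EuclideanSpace ℝ (Fin n) → ℝ}
    {x : EuclideanSpace ℝ (Fin n)} (h : f₁ =ᶠ[nhds x] f) (m : ℕ) :
    iteratedFDeriv ℝ m f₁ x = iteratedFDeriv ℝ m f x := by
  rw [← iteratedFDerivWithin_univ, ← iteratedFDerivWithin_univ]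
  exact Filter.EventuallyEq.iteratedFDerivWithin_eq (by rwa [nhdsWithin_univ]) h.self_of_nhds m

lemma FracLapAux.measurableSet_norm_ge (n : ℕ) (R : ℝ) :
    MeasurableSet {z : EuclideanSpace ℝ (Fin n) | R ≤ ‖z‖} :=
  (isClosed_le continuous_const continuous_norm).measurableSet

lemma FracLapAux.integrableOn_norm_rpow (n : ℕ) {p R : ℝ} (hp : (n : ℝ) < p) (hR : 0 < R) :
    IntegrableOn (fun z : EuclideanSpace ℝ (Fin n) => ‖z‖ ^ (-p))
      {z : EuclideanSpace ℝ (Fin n) | R ≤ ‖z‖} := by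
  have hp0 : 0 < p := (Nat.cast_nonneg n).trans_lt hp
  have hC : (0:ℝ) < 1 + 1/R := by positivity
  have hint : Integrable (fun z : EuclideanSpace ℝ (Fin n) => (1 + 1/R)^p * (1 + ‖z‖) ^ (-p)) :=
    (integrable_one_add_norm (by simpa [finrank_euclideanSpace] using hp)).const_mul _
  have hS := FracLapAux.measurableSet_norm_ge n R
  have hcont : ContinuousOn (fun z : EuclideanSpace ℝ (Fin n) => ‖z‖ ^ (-p))
      {z : EuclideanSpace ℝ (Fin n) | R ≤ ‖z‖} := by
    intro z hz
    have hz0 : ‖z‖ ≠ 0 := (hR.trans_le hz).ne'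
    exact ((Real.continuousAt_rpow_const _ _ (Or.inl hz0)).comp
      continuous_norm.continuousAt).continuousWithinAt
  refine Integrable.mono' hint.restrict (hcont.aestronglyMeasurable hS) ?_
  filter_upwards [ae_restrict_mem hS] with z hz
  have hz1 : R ≤ ‖z‖ := hz
  have hz0 : 0 < ‖z‖ := hR.trans_le hz1
  have h1 : (0:ℝ) < 1 + ‖z‖ := by positivity
  have h2 : 1 + ‖z‖ ≤ (1 + 1/R) * ‖z‖ := by
    have h : 1 ≤ ‖z‖ / R := (one_le_div hR).2 hz1
    have he : (1 + 1/R) * ‖z‖ = ‖z‖/R + ‖z‖ := by field_simp; ring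
    rw [he]; linarith
  have h3 : (1+‖z‖)^p ≤ (1+1/R)^p * ‖z‖^p := by
    calc (1+‖z‖)^p ≤ ((1+1/R)*‖z‖)^p := Real.rpow_le_rpow h1.le h2 hp0.le
    _ = _ := Real.mul_rpow hC.le (norm_nonneg _)
  rw [Real.norm_eq_abs, abs_of_nonneg (Real.rpow_nonneg (norm_nonneg _) _),
    Real.rpow_neg (norm_nonneg _), Real.rpow_neg h1.le, ← div_eq_mul_inv,
    le_div_iff₀ (Real.rpow_pos_of_pos h1 p), inv_mul_eq_div,
    div_le_iff₀ (Real.rpow_pos_of_pos hz0 p)]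
  exact h3

lemma FracLapAux.setIntegral_norm_rpow (n : ℕ) (hn : 1 ≤ n) {σ R : ℝ} (hσ : 0 < σ)
    (hR : 0 < R) :
    ∫ z in {z : EuclideanSpace ℝ (Fin n) | R ≤ ‖z‖}, ‖z‖ ^ (-((n:ℝ) + 2*σ)) =
      sphereSurface n * R ^ (-(2*σ)) / (2*σ) := by
  haveI : Nonempty (Fin n) := ⟨⟨0, hn⟩⟩
  haveI : Nontrivial (EuclideanSpace ℝ (Fin n)) :=
    inferInstance
  set p : ℝ := (n:ℝ) + 2*σ with hp
  set f : ℝ → ℝ := fun r => if R ≤ r then r ^ (-p) else 0 with hf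
  have hS := FracLapAux.measurableSet_norm_ge n R
  have h1 : ∫ z in {z : EuclideanSpace ℝ (Fin n) | R ≤ ‖z‖}, ‖z‖ ^ (-p) =
      ∫ z : EuclideanSpace ℝ (Fin n), f ‖z‖ := by
    rw [← integral_indicator hS]
    refine integral_congr_ae (Filter.Eventually.of_forall fun z => ?_)
    simp only [indicator, mem_setOf_eq, hf]
  rw [h1, integral_fun_norm_addHaar volume f]
  have hdim : Module.finrank ℝ (EuclideanSpace ℝ (Fin n)) = n := by
    simp [finrank_euclideanSpace]
  rw [hdim]
  have h2 : ∫ y in Ioi (0:ℝ), y ^ (n - 1) • f y = R ^ (-(2*σ)) / (2*σ) := by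
    have e1 : (fun y : ℝ => y ^ (n-1) • f y) =
        (Ici R).indicator (fun y => y ^ (n-1) * y ^ (-p)) := by
      funext y
      simp only [indicator, mem_Ici, hf, smul_eq_mul]
      by_cases h : R ≤ y <;> simp [h]
    have e15 : Ioi (0:ℝ) ∩ Ici R = Ici R :=
      inter_eq_self_of_subset_right (fun y (hy : R ≤ y) => hR.trans_le hy)
    rw [e1, setIntegral_indicator measurableSet_Ici, e15, integral_Ici_eq_integral_Ioi]
    have e2 : ∫ y in Ioi R, y ^ (n-1) * y ^ (-p) = ∫ y in Ioi R, y ^ ((n:ℝ) - 1 + -p) := by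
      refine setIntegral_congr_fun measurableSet_Ioi (fun y hy => ?_)
      have hy0 : 0 < y := hR.trans hy
      rw [← Real.rpow_natCast y (n-1), Nat.cast_sub hn, Nat.cast_one, ← Real.rpow_add hy0]
    rw [e2, integral_Ioi_rpow_of_lt (by simp only [hp]; linarith) hR]
    have e3 : (n:ℝ) - 1 + -p + 1 = -(2*σ) := by simp only [hp]; ring
    rw [e3]
    rw [neg_div, div_neg, neg_neg]
  rw [h2, sphereSurface]
  simp only [nsmul_eq_mul, smul_eq_mul, measureReal_def]
  ring

lemma FracLapAux.setIntegral_translate (n : ℕ) (x : EuclideanSpace ℝ (Fin n)) (R p : ℝ) :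
    ∫ y in {y : EuclideanSpace ℝ (Fin n) | R ≤ ‖y‖}, ‖x - y‖ ^ (-p) =
    ∫ z in {z : EuclideanSpace ℝ (Fin n) | R ≤ ‖x - z‖}, ‖z‖ ^ (-p) := by
  have hS : MeasurableSet {y : EuclideanSpace ℝ (Fin n) | R ≤ ‖y‖} :=
    (isClosed_le continuous_const continuous_norm).measurableSet
  have hT : MeasurableSet {z : EuclideanSpace ℝ (Fin n) | R ≤ ‖x - z‖} :=
    (isClosed_le continuous_const (continuous_const.sub continuous_id).norm).measurableSet
  rw [← integral_indicator hS, ← integral_indicator hT]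
  set F : EuclideanSpace ℝ (Fin n) → ℝ :=
    {y : EuclideanSpace ℝ (Fin n) | R ≤ ‖y‖}.indicator (fun y => ‖x - y‖ ^ (-p)) with hF
  calc ∫ y, F y = ∫ z, F (x + z) := (integral_add_left_eq_self F x).symm
    _ = ∫ z, F (x + (-z)) := (integral_neg_eq_self (fun z => F (x + z)) volume).symm
    _ = ∫ z, {z : EuclideanSpace ℝ (Fin n) | R ≤ ‖x - z‖}.indicator
          (fun z => ‖z‖ ^ (-p)) z := by
        refine integral_congr_ae (Filter.Eventually.of_forall fun z => ?_)
        simp only [hF, indicator, mem_setOf_eq, ← sub_eq_add_neg, sub_sub_cancel]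

lemma FracLapAux.tendsto_R (σ : ℝ) (hσ : 0 < σ) :
    Tendsto (fun j : ℕ => (j:ℝ) ^ (1/(2*σ))) atTop atTop :=
  (tendsto_rpow_atTop (by positivity)).comp tendsto_natCast_atTop_atTop

lemma FracLapAux.tendsto_bound (n : ℕ) {σ : ℝ} (hσ : 0 < σ) (a : ℝ) :
    Tendsto (fun j : ℕ =>
        (j:ℝ) * (sphereSurface n * (3*(j:ℝ)^(1/(2*σ)) + a) ^ (-(2*σ)) / (2*σ)))
      atTop (nhds (sphereSurface n / (2*σ*3^(2*σ)))) := by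
  set S := sphereSurface n
  set Rj : ℕ → ℝ := fun j => (j:ℝ) ^ (1/(2*σ)) with hRj
  have hRtop : Tendsto Rj atTop atTop := FracLapAux.tendsto_R σ hσ
  have step1 : Tendsto (fun j => a / Rj j) atTop (nhds 0) :=
    tendsto_const_nhds.div_atTop hRtop
  have step2 : Tendsto (fun j => 3 + a / Rj j) atTop (nhds 3) := by
    simpa using tendsto_const_nhds.add step1
  have step3 : Tendsto (fun j => (1:ℝ) / (3 + a / Rj j)) atTop (nhds (1/3)) :=
    tendsto_const_nhds.div step2 (by norm_num)
  have step4 : Tendsto (fun j => ((1:ℝ) / (3 + a / Rj j)) ^ (2*σ)) atTop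
      (nhds (((1:ℝ)/3) ^ (2*σ))) :=
    ((Real.continuousAt_rpow_const (1/3) (2*σ) (Or.inl (by norm_num))).tendsto).comp step3
  have step5 : Tendsto (fun j => S / (2*σ) * ((1:ℝ) / (3 + a / Rj j)) ^ (2*σ)) atTop
      (nhds (S / (2*σ) * ((1:ℝ)/3) ^ (2*σ))) := step4.const_mul _
  have hval : S / (2*σ) * ((1:ℝ)/3) ^ (2*σ) = S / (2*σ*3^(2*σ)) := by
    rw [Real.div_rpow (by norm_num) (by norm_num), Real.one_rpow]
    have h3 : (0:ℝ) < 3 ^ (2*σ) := Real.rpow_pos_of_pos (by norm_num) _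
    field_simp
  rw [← hval]
  refine Tendsto.congr' ?_ step5
  filter_upwards [hRtop.eventually_ge_atTop (|a|+1)] with j hj
  have hR0 : 0 < Rj j := lt_of_lt_of_le (by positivity) hj
  have hden : 0 < 3 * Rj j + a := by
    have h1 : |a| < Rj j := lt_of_lt_of_le (lt_add_one _) hj
    have h2 := neg_abs_le a
    nlinarith
  have hj1 : (j:ℝ) = Rj j ^ (2*σ) := by
    simp only [hRj]
    rw [← Real.rpow_mul (Nat.cast_nonneg j),
      div_mul_cancel₀ 1 (by positivity : (2*σ) ≠ 0), Real.rpow_one]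
  have key : ((1:ℝ) / (3 + a / Rj j)) = Rj j / (3 * Rj j + a) := by
    rw [show 3 + a / Rj j = (3 * Rj j + a) / Rj j by field_simp [hR0.ne'], one_div_div]
  rw [key]
  have hsplit : (Rj j / (3 * Rj j + a)) ^ (2*σ)
      = Rj j ^ (2*σ) * (3 * Rj j + a) ^ (-(2*σ)) := by
    rw [Real.div_rpow hR0.le hden.le, Real.rpow_neg hden.le, div_eq_mul_inv]
  rw [hsplit, ← hj1]
  ring

end Aux

theorem fracLap_of_step_sequence (n : ℕ) (hn : 1 ≤ n) (σ : ℝ) (hσ : σ ∈ Set.Ioo (0 : ℝ) 1)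
    (V : ℕ → EuclideanSpace ℝ (Fin n) → ℝ)
    (hV : ∀ (j : ℕ) (y : EuclideanSpace ℝ (Fin n)),
      V j y = if ‖y‖ < 3 * (j : ℝ) ^ (1 / (2 * σ)) then 1 else 1 + j) :
    (∀ K : Set (EuclideanSpace ℝ (Fin n)), IsCompact K → ∀ m : ℕ, m ≤ 2 →
      TendstoUniformlyOn (fun j => iteratedFDeriv ℝ m (V j))
        (iteratedFDeriv ℝ m (fun _ => (1 : ℝ))) Filter.atTop K) ∧
    (∀ x : EuclideanSpace ℝ (Fin n), ∃ g : ℕ → ℝ,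
      (∀ j : ℕ, 1 ≤ j → ‖x‖ < 3 * (j : ℝ) ^ (1 / (2 * σ)) →
        HasFracLap n σ (V j) x (g j)) ∧
      Filter.Tendsto g Filter.atTop
        (nhds (-(fracLapConst n σ) * sphereSurface n / (2 * σ * 3 ^ (2 * σ))))) := by
  obtain ⟨hσ0, hσ1⟩ := hσ
  set Rj : ℕ → ℝ := fun j => (j:ℝ) ^ (1/(2*σ)) with hRj
  have hRtop : Tendsto Rj atTop atTop := FracLapAux.tendsto_R σ hσ0
  constructor
  · -- C²_loc convergence
    intro K hK m _
    obtain ⟨r, hr⟩ := hK.isBounded.subset_ball 0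
    rw [Metric.tendstoUniformlyOn_iff]
    intro ε hε
    filter_upwards [hRtop.eventually_ge_atTop ((r+1)/3)] with j hj y hy
    have heq : V j =ᶠ[nhds y] (fun _ => (1:ℝ)) := by
      filter_upwards [Metric.ball_mem_nhds y one_pos] with z hz
      rw [hV]
      have hzr : ‖z‖ < 1 + r := by
        have h1 : dist z y < 1 := hz
        have h2 : ‖y‖ < r := mem_ball_zero_iff.1 (hr hy)
        calc ‖z‖ = ‖(z - y) + y‖ := by rw [sub_add_cancel]
          _ ≤ ‖z - y‖ + ‖y‖ := norm_add_le _ _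
          _ < 1 + r := by rw [← dist_eq_norm]; linarith
      rw [if_pos (lt_of_lt_of_le hzr (by linarith))]
      exact Nat.cast_one
    rw [FracLapAux.iter_congr heq m, dist_self]
    exact hε
  · -- fractional Laplacian
    intro x
    set p : ℝ := (n:ℝ) + 2*σ with hp
    have hnp : (n:ℝ) < p := by simp only [hp]; linarith
    set I : ℕ → ℝ := fun j => ∫ y in {y : EuclideanSpace ℝ (Fin n) | 3*Rj j ≤ ‖y‖},
      ‖x - y‖ ^ (-p) with hI
    refine ⟨fun j => fracLapConst n σ * (-(j:ℝ) * I j), ?_, ?_⟩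
    · -- HasFracLap
      intro j _ hxj
      unfold HasFracLap
      have hδ : 0 < 3*Rj j - ‖x‖ := by
        show 0 < 3 * ((j:ℝ) ^ (1/(2*σ))) - ‖x‖
        linarith
      refine Tendsto.congr' ?_ tendsto_const_nhds
      filter_upwards [Ioo_mem_nhdsGT_of_mem ⟨le_refl (0:ℝ), hδ⟩] with ε hε
      obtain ⟨hε0, hεδ⟩ := hε
      have hVx : V j x = 1 := by rw [hV, if_pos hxj]; exact Nat.cast_one
      have hSmeas := FracLapAux.measurableSet_norm_ge n (3*Rj j)
      have hEmeas : MeasurableSet {y : EuclideanSpace ℝ (Fin n) | ε < dist x y} :=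
        (isOpen_lt continuous_const (continuous_const.dist continuous_id)).measurableSet
      have hind : ∀ y : EuclideanSpace ℝ (Fin n),
          {y : EuclideanSpace ℝ (Fin n) | ε < dist x y}.indicator
            (fun y => (V j x - V j y) / dist x y ^ ((n:ℝ) + 2*σ)) y =
          {y : EuclideanSpace ℝ (Fin n) | 3*Rj j ≤ ‖y‖}.indicator
            (fun y => -(j:ℝ) * ‖x - y‖ ^ (-p)) y := by
        intro y
        by_cases hy : 3*Rj j ≤ ‖y‖
        · have hdist : ε < dist x y := by
            have h1 : ‖y‖ - ‖x‖ ≤ ‖y - x‖ := norm_sub_norm_le _ _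
            have h2 : dist x y = ‖y - x‖ := by rw [dist_comm, dist_eq_norm]
            linarith
          have hVy : V j y = 1 + (j:ℝ) := by
            rw [hV, if_neg (not_lt.2 hy)]; push_cast; ring
          rw [Set.indicator_of_mem (show y ∈ {y : EuclideanSpace ℝ (Fin n) | ε < dist x y}
              from hdist),
            Set.indicator_of_mem (show y ∈ {y : EuclideanSpace ℝ (Fin n) | 3*Rj j ≤ ‖y‖}
              from hy),
            hVx, hVy, dist_eq_norm]
          rw [Real.rpow_neg (norm_nonneg _), div_eq_mul_inv]
          simp only [hp]
          ring
        · have hVy : V j y = 1 := by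
            rw [hV, if_pos (not_le.1 hy)]; exact Nat.cast_one
          rw [Set.indicator_of_notMem
            (show y ∉ {y : EuclideanSpace ℝ (Fin n) | 3*Rj j ≤ ‖y‖} from hy)]
          by_cases hd : ε < dist x y
          · rw [Set.indicator_of_mem (show y ∈ {y : EuclideanSpace ℝ (Fin n) | ε < dist x y}
                from hd), hVx, hVy, sub_self, zero_div]
          · rw [Set.indicator_of_notMem
              (show y ∉ {y : EuclideanSpace ℝ (Fin n) | ε < dist x y} from hd)]
      rw [← integral_indicator hEmeas]
      simp only [hind]
      rw [integral_indicator hSmeas, integral_const_mul]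
    · -- the limit
      have hS23 : Tendsto (fun j : ℕ => (j:ℝ) * I j) atTop
          (nhds (sphereSurface n / (2*σ*3^(2*σ)))) := by
        refine tendsto_of_tendsto_of_tendsto_of_le_of_le'
          (FracLapAux.tendsto_bound n hσ0 ‖x‖) (FracLapAux.tendsto_bound n hσ0 (-‖x‖)) ?_ ?_
        · -- lower bound
          filter_upwards [hRtop.eventually_ge_atTop (‖x‖+1)] with j hj
          have hR0 : 0 < Rj j := lt_of_lt_of_le (by positivity) hj
          have hB0 : 0 < 3*Rj j - ‖x‖ := by
            have := norm_nonneg x; nlinarith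
          have htr : I j = ∫ z in {z : EuclideanSpace ℝ (Fin n) | 3*Rj j ≤ ‖x - z‖},
              ‖z‖ ^ (-p) := FracLapAux.setIntegral_translate n x _ _
          have hintB : IntegrableOn (fun z : EuclideanSpace ℝ (Fin n) => ‖z‖ ^ (-p))
              {z : EuclideanSpace ℝ (Fin n) | 3*Rj j - ‖x‖ ≤ ‖z‖} :=
            FracLapAux.integrableOn_norm_rpow n hnp hB0
          have hsubTB : {z : EuclideanSpace ℝ (Fin n) | 3*Rj j ≤ ‖x - z‖} ⊆
              {z : EuclideanSpace ℝ (Fin n) | 3*Rj j - ‖x‖ ≤ ‖z‖} := by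
            intro z hz
            have h1 : ‖x - z‖ ≤ ‖x‖ + ‖z‖ := norm_sub_le _ _
            simp only [mem_setOf_eq] at hz ⊢
            linarith
          have hsubAT : {z : EuclideanSpace ℝ (Fin n) | 3*Rj j + ‖x‖ ≤ ‖z‖} ⊆
              {z : EuclideanSpace ℝ (Fin n) | 3*Rj j ≤ ‖x - z‖} := by
            intro z hz
            have h1 : ‖z‖ - ‖x‖ ≤ ‖z - x‖ := norm_sub_norm_le _ _
            have h2 : ‖z - x‖ = ‖x - z‖ := norm_sub_rev _ _
            simp only [mem_setOf_eq] at hz ⊢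
            linarith
          have hIA : ∫ z in {z : EuclideanSpace ℝ (Fin n) | 3*Rj j + ‖x‖ ≤ ‖z‖},
              ‖z‖ ^ (-p) = sphereSurface n * (3*Rj j + ‖x‖) ^ (-(2*σ)) / (2*σ) :=
            FracLapAux.setIntegral_norm_rpow n hn hσ0 (by positivity)
          have hmono : ∫ z in {z : EuclideanSpace ℝ (Fin n) | 3*Rj j + ‖x‖ ≤ ‖z‖},
              ‖z‖ ^ (-p) ≤ ∫ z in {z : EuclideanSpace ℝ (Fin n) | 3*Rj j ≤ ‖x - z‖},
              ‖z‖ ^ (-p) := by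
            refine setIntegral_mono_set (hintB.mono_set hsubTB)
              (Filter.Eventually.of_forall fun z => Real.rpow_nonneg (norm_nonneg _) _)
              (HasSubset.Subset.eventuallyLE hsubAT)
          calc (j:ℝ) * (sphereSurface n * (3*Rj j + ‖x‖) ^ (-(2*σ)) / (2*σ))
              = (j:ℝ) * ∫ z in {z : EuclideanSpace ℝ (Fin n) | 3*Rj j + ‖x‖ ≤ ‖z‖},
                ‖z‖ ^ (-p) := by rw [hIA]
            _ ≤ (j:ℝ) * I j := by
                rw [htr]
                exact mul_le_mul_of_nonneg_left hmono (Nat.cast_nonneg j)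
        · -- upper bound
          filter_upwards [hRtop.eventually_ge_atTop (‖x‖+1)] with j hj
          have hR0 : 0 < Rj j := lt_of_lt_of_le (by positivity) hj
          have hB0 : 0 < 3*Rj j - ‖x‖ := by
            have := norm_nonneg x; nlinarith
          have htr : I j = ∫ z in {z : EuclideanSpace ℝ (Fin n) | 3*Rj j ≤ ‖x - z‖},
              ‖z‖ ^ (-p) := FracLapAux.setIntegral_translate n x _ _
          have hintB : IntegrableOn (fun z : EuclideanSpace ℝ (Fin n) => ‖z‖ ^ (-p))
              {z : EuclideanSpace ℝ (Fin n) | 3*Rj j - ‖x‖ ≤ ‖z‖} :=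
            FracLapAux.integrableOn_norm_rpow n hnp hB0
          have hsubTB : {z : EuclideanSpace ℝ (Fin n) | 3*Rj j ≤ ‖x - z‖} ⊆
              {z : EuclideanSpace ℝ (Fin n) | 3*Rj j - ‖x‖ ≤ ‖z‖} := by
            intro z hz
            have h1 : ‖x - z‖ ≤ ‖x‖ + ‖z‖ := norm_sub_le _ _
            simp only [mem_setOf_eq] at hz ⊢
            linarith
          have hIB : ∫ z in {z : EuclideanSpace ℝ (Fin n) | 3*Rj j - ‖x‖ ≤ ‖z‖},
              ‖z‖ ^ (-p) = sphereSurface n * (3*Rj j - ‖x‖) ^ (-(2*σ)) / (2*σ) :=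
            FracLapAux.setIntegral_norm_rpow n hn hσ0 hB0
          have hmono : ∫ z in {z : EuclideanSpace ℝ (Fin n) | 3*Rj j ≤ ‖x - z‖},
              ‖z‖ ^ (-p) ≤ ∫ z in {z : EuclideanSpace ℝ (Fin n) | 3*Rj j - ‖x‖ ≤ ‖z‖},
              ‖z‖ ^ (-p) :=
            setIntegral_mono_set hintB
              (Filter.Eventually.of_forall fun z => Real.rpow_nonneg (norm_nonneg _) _)
              (HasSubset.Subset.eventuallyLE hsubTB)
          calc (j:ℝ) * I j
              ≤ (j:ℝ) * ∫ z in {z : EuclideanSpace ℝ (Fin n) | 3*Rj j - ‖x‖ ≤ ‖z‖},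
                ‖z‖ ^ (-p) := by
                rw [htr]
                exact mul_le_mul_of_nonneg_left hmono (Nat.cast_nonneg j)
            _ = (j:ℝ) * (sphereSurface n * (3*Rj j + (-‖x‖)) ^ (-(2*σ)) / (2*σ)) := by
                rw [hIB]; ring_nf
      rw [show -(fracLapConst n σ) * sphereSurface n / (2 * σ * 3 ^ (2 * σ)) =
          fracLapConst n σ * -(sphereSurface n / (2 * σ * 3 ^ (2 * σ))) by ring]
      exact Tendsto.congr (fun j => by ring) ((hS23.neg).const_mul (fracLapConst n σ))
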